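/- Let (y^k, z^k, x^k)_{k≥0} be an sPADMM sequence with 0 < τ < (1+√5)/2. Then for every k ≥ 1: D_G(w̃^{k+1}, w^{k+1}) + η̃_{k+1} ≤ σ_τ · D_G(w̃^{k+1}, w^k) + (1 − γ_τ)·η̃_k. -/

import Mathlib

open scoped RealInnerProductSpace

noncomputable section

/-- The subdifferential of a function `f : Y → ℝ ∪ {+∞}` (encoded with values in `EReal`). -/
def subdiff {Y : Type*} [NormedAddCommGroup Y] [InnerProductSpace ℝ Y]
    (f : Y → EReal) (y : Y) : Set Y :=
  {ξ | ∀ y', f y + ((⟪ξ, y' - y⟫ : ℝ) : EReal) ≤ f y'}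

lemma nonneg_of_mul_nonneg_pos' {τ X : ℝ} (hτ : 0 < τ) (h : 0 ≤ τ * X) : 0 ≤ X := by
  by_contra h'
  push_neg at h'
  nlinarith

lemma pos_of_mul_pos_right' {u v : ℝ} (h : 0 < u * v) (hv : 0 < v) : 0 < u := by
  by_contra h'
  push_neg at h'
  nlinarith

lemma quad_ineq' {A1 f0 t c p q : ℝ} (hA : 0 ≤ A1) (hf : 0 ≤ f0) (hK : t^2 ≤ A1*f0)
    (hc : c^2 ≤ p*q) (hp : 0 ≤ p) (hq : 0 ≤ q) : 2*(t*c) ≤ A1*p + f0*q := by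
  nlinarith [sq_nonneg (A1*p - f0*q), add_nonneg (mul_nonneg hA hp) (mul_nonneg hf hq),
    mul_le_mul hK hc (sq_nonneg c) (mul_nonneg hA hf), sq_nonneg c, sq_nonneg t]

set_option maxHeartbeats 4000000 in
theorem sPADMM_generalized_HPE
    {Y Z X : Type*}
    [NormedAddCommGroup Y] [InnerProductSpace ℝ Y] [FiniteDimensional ℝ Y]
    [NormedAddCommGroup Z] [InnerProductSpace ℝ Z] [FiniteDimensional ℝ Z]
    [NormedAddCommGroup X] [InnerProductSpace ℝ X] [FiniteDimensional ℝ X]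
    (ϑf : Y → EReal) (φg : Z → EReal)
    (hϑbot : ∀ v, ϑf v ≠ ⊥) (hϑproper : ∃ v, ϑf v ≠ ⊤)
    (hϑlsc : LowerSemicontinuous ϑf)
    (hϑconvex : ∀ (v v' : Y) (a b : ℝ), 0 ≤ a → 0 ≤ b → a + b = 1 →
      ϑf (a • v + b • v') ≤ (a : EReal) * ϑf v + (b : EReal) * ϑf v')
    (hφbot : ∀ v, φg v ≠ ⊥) (hφproper : ∃ v, φg v ≠ ⊤)
    (hφlsc : LowerSemicontinuous φg)
    (hφconvex : ∀ (v v' : Z) (a b : ℝ), 0 ≤ a → 0 ≤ b → a + b = 1 →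
      φg (a • v + b • v') ≤ (a : EReal) * φg v + (b : EReal) * φg v')
    (A : X →ₗ[ℝ] Y) (B : X →ₗ[ℝ] Z) (c : X)
    (β τ : ℝ) (hβ : 0 < β) (hτ : 0 < τ)
    (S : Y →ₗ[ℝ] Y) (hSsym : LinearMap.IsSymmetric S) (hSpsd : ∀ v, 0 ≤ ⟪S v, v⟫)
    (T₀ : Z →ₗ[ℝ] Z) (hTsym : LinearMap.IsSymmetric T₀) (hTpsd : ∀ v, 0 ≤ ⟪T₀ v, v⟫)
    (hτub : τ < (1 + Real.sqrt 5) / 2)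
    (SigZ : Z →ₗ[ℝ] Z) (hSigZsym : LinearMap.IsSymmetric SigZ)
    (hSigZpsd : ∀ v, 0 ≤ ⟪SigZ v, v⟫)
    (hSigZmono : ∀ (z₁ z₂ η₁ η₂ : Z), η₁ ∈ subdiff φg z₁ → η₂ ∈ subdiff φg z₂ →
      ⟪z₁ - z₂, SigZ (z₁ - z₂)⟫ ≤ ⟪η₁ - η₂, z₁ - z₂⟫)
    (y : ℕ → Y) (z : ℕ → Z) (x : ℕ → X)
    (hADMMy : ∀ k : ℕ,
      -(A (x k)) - β • A (LinearMap.adjoint A (y (k+1)) + LinearMap.adjoint B (z k) - c)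
        - S (y (k+1) - y k) ∈ subdiff ϑf (y (k+1)))
    (hADMMz : ∀ k : ℕ,
      -(B (x k)) - β • B (LinearMap.adjoint A (y (k+1)) + LinearMap.adjoint B (z (k+1)) - c)
        - T₀ (z (k+1) - z k) ∈ subdiff φg (z (k+1)))
    (hADMMx : ∀ k : ℕ,
      x (k+1) = x k + (τ * β) • (LinearMap.adjoint A (y (k+1)) + LinearMap.adjoint B (z (k+1)) - c))
    (xt : ℕ → X)
    (hxt : ∀ k : ℕ,
      xt (k+1) = x k + β • (LinearMap.adjoint A (y (k+1)) + LinearMap.adjoint B (z k) - c))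
    (σ ν γ : ℝ)
    (hσ : σ = max ((2 - τ) / 2) ((1 + τ * (τ - 1) ^ 2) / (2 - (1 - τ) ^ 2)))
    (hν : ν = σ * (τ + 1) + τ - 1)
    (hγ : γ = min (min (τ ^ 2 * σ) (σ - (τ + 1) * (τ - 1) ^ 2) / (τ * (σ - (τ - 1) ^ 2)))
      (τ * σ / ν))
    (et : ℕ → ℝ)
    (het : ∀ k : ℕ, et (k+1) =
      (σ - (τ - 1) ^ 2) * β / (2 * τ) *
          ‖LinearMap.adjoint A (y (k+1)) + LinearMap.adjoint B (z (k+1)) - c‖ ^ 2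
        + σ / 2 * ⟪y (k+1) - y k, S (y (k+1) - y k)⟫
        + ν / (2 * τ) * ⟪z (k+1) - z k, T₀ (z (k+1) - z k)⟫
        + (σ + τ - 1) / τ * ⟪z (k+1) - z k, SigZ (z (k+1) - z k)⟫)
    (DG : Y × Z × X → Y × Z × X → ℝ)
    (hDG : ∀ w w' : Y × Z × X, DG w w' = (1/2) * (⟪w.1 - w'.1, S (w.1 - w'.1)⟫
      + ⟪w.2.1 - w'.2.1, T₀ (w.2.1 - w'.2.1) + β • B (LinearMap.adjoint B (w.2.1 - w'.2.1))⟫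
      + (τ * β)⁻¹ * ‖w.2.2 - w'.2.2‖ ^ 2)) :
    ∀ k : ℕ, 1 ≤ k →
      DG (y (k+1), z (k+1), xt (k+1)) (y (k+1), z (k+1), x (k+1)) + et (k+1)
        ≤ σ * DG (y (k+1), z (k+1), xt (k+1)) (y k, z k, x k) + (1 - γ) * et k := by
  subst hν
  intro k hk
  obtain ⟨j, rfl⟩ : ∃ j, k = j + 1 := ⟨k - 1, by omega⟩
  -- scalar facts
  have hτ2 : τ < 2 := by
    have h1 := Real.sq_sqrt (show (0:ℝ) ≤ 5 by norm_num)
    have h2 := sq_nonneg (Real.sqrt 5 - 3)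
    linarith
  have hσ1 : (2 - τ)/2 ≤ σ := hσ ▸ le_max_left _ _
  have hden : (0:ℝ) < 2 - (1-τ)^2 := by
    linarith [mul_pos hτ (show (0:ℝ) < 2-τ by linarith)]
  have hσ2 : (1 + τ*(τ-1)^2) / (2 - (1-τ)^2) ≤ σ := hσ ▸ le_max_right _ _
  have hσ2' : 1 + τ*(τ-1)^2 ≤ σ * (2 - (1-τ)^2) := by
    rw [div_le_iff₀ hden] at hσ2; linarith
  have he : 0 < σ + τ - 1 := by linarith
  have hσpos : 0 < σ := by linarith
  have hd : 0 < σ - (τ-1)^2 := by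
    rcases le_or_gt τ 1 with h1 | h1
    · linarith [mul_pos hτ (show (0:ℝ) < 3-2*τ by linarith)]
    · have h1s : (0:ℝ) < 1-(τ-1)+(τ-1)^3 :=
        by linarith [pow_pos (show (0:ℝ) < τ-1 by linarith) 3]
      have hnum : (τ-1)^2*(2-(1-τ)^2) < 1+τ*(τ-1)^2 := by
        linarith [mul_pos hτ h1s]
      have hq : 0 < (σ-(τ-1)^2)*(2-(1-τ)^2) := by linarith [hσ2', hnum]
      exact pos_of_mul_pos_right' hq hden
  have hf0 : 0 ≤ σ*(1+τ) - 1 := by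
    rcases le_or_gt τ 1 with h1 | h1
    · have hh1 := mul_nonneg hτ.le (show (0:ℝ) ≤ 1-τ by linarith)
      have hh2 := mul_le_mul_of_nonneg_right hσ1 (show (0:ℝ) ≤ 1+τ by linarith)
      linarith [hh1, hh2]
    · have hh1 := mul_nonneg hσpos.le
        (show (0:ℝ) ≤ (1+τ)-(2-(1-τ)^2) by linarith [sq_nonneg (τ-1)])
      have hh2 := mul_nonneg hτ.le (sq_nonneg (τ-1))
      linarith [hh1, hh2, hσ2']
  have hνpos : 0 < σ * (τ + 1) + τ - 1 := by
    linarith [mul_pos hτ hσpos]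
  have hγ1 : γ * (σ * (τ + 1) + τ - 1) ≤ τ * σ := by
    have h : γ ≤ τ*σ/(σ * (τ + 1) + τ - 1) := by rw [hγ]; exact min_le_right _ _
    calc γ * (σ * (τ + 1) + τ - 1)
        ≤ (τ*σ/(σ * (τ + 1) + τ - 1)) * (σ * (τ + 1) + τ - 1) :=
          mul_le_mul_of_nonneg_right h hνpos.le
      _ = τ*σ := by field_simp
  have hγle1 : γ ≤ 1 := by
    by_contra h
    push_neg at h
    have := mul_pos hνpos (show (0:ℝ) < γ - 1 by linarith)
    linarith [this, hγ1]
  have hτd : 0 < τ*(σ-(τ-1)^2) := mul_pos hτ hd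
  have hγm : γ ≤ min (τ ^ 2 * σ) (σ - (τ + 1) * (τ - 1) ^ 2) / (τ * (σ - (τ - 1) ^ 2)) := by
    rw [hγ]; exact min_le_left _ _
  have hγm' : γ * (τ*(σ-(τ-1)^2)) ≤ min (τ ^ 2 * σ) (σ - (τ + 1) * (τ - 1) ^ 2) := by
    calc γ * (τ*(σ-(τ-1)^2))
        ≤ (min (τ ^ 2 * σ) (σ - (τ + 1) * (τ - 1) ^ 2) / (τ * (σ - (τ - 1) ^ 2))) * (τ*(σ-(τ-1)^2)) :=
          mul_le_mul_of_nonneg_right hγm hτd.le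
      _ = _ := by field_simp
  have hγ2 : γ * (τ*(σ-(τ-1)^2)) ≤ τ^2*σ := le_trans hγm' (min_le_left _ _)
  have hγ3 : γ * (τ*(σ-(τ-1)^2)) ≤ σ - (τ + 1) * (τ - 1) ^ 2 := le_trans hγm' (min_le_right _ _)
  have hKey : ((1-τ)*(σ+τ-1))^2 ≤ ((1-γ)*(σ-(τ-1)^2)) * (σ*(1+τ)-1) := by
    rcases le_or_gt τ 1 with h1 | h1
    · have h' : 0 ≤ τ * ((1-γ)*(σ-(τ-1)^2) - (1-τ)*(σ+τ-1)) := by linarith [hγ2]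
      have h2 : (1-τ)*(σ+τ-1) ≤ (1-γ)*(σ-(τ-1)^2) := by
        have := nonneg_of_mul_nonneg_pos' hτ h'
        linarith
      have h3 : (1-τ)*(σ+τ-1) ≤ σ*(1+τ)-1 := by
        linarith [mul_nonneg hτ.le (show (0:ℝ) ≤ 2*σ+τ-2 by linarith)]
      have hu : 0 ≤ (1-τ)*(σ+τ-1) := mul_nonneg (by linarith) he.le
      have hv : 0 ≤ (1-γ)*(σ-(τ-1)^2) := le_trans hu h2
      calc ((1-τ)*(σ+τ-1))^2 = ((1-τ)*(σ+τ-1))*((1-τ)*(σ+τ-1)) := sq ((1-τ)*(σ+τ-1))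
        _ ≤ ((1-γ)*(σ-(τ-1)^2)) * (σ*(1+τ)-1) := mul_le_mul h2 h3 hu hv
    · have h2 : (τ-1)*(σ+τ-1) ≤ τ*((1-γ)*(σ-(τ-1)^2)) := by linarith [hγ3]
      have h3 : τ*((τ-1)*(σ+τ-1)) ≤ σ*(1+τ)-1 := by linarith [hσ2']
      have hL : 0 ≤ (τ-1)*(σ+τ-1) := mul_nonneg (by linarith) he.le
      have hL2 : 0 ≤ τ*((τ-1)*(σ+τ-1)) := mul_nonneg hτ.le hL
      have hR : 0 ≤ τ*((1-γ)*(σ-(τ-1)^2)) := le_trans hL h2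
      have hmul := mul_le_mul h2 h3 hL2 hR
      have h4 : 0 ≤ τ * (((1-γ)*(σ-(τ-1)^2)) * (σ*(1+τ)-1) - ((1-τ)*(σ+τ-1))^2) := by
        linarith [hmul]
      have := nonneg_of_mul_nonneg_pos' hτ h4
      linarith
  -- instantiate hypotheses
  have Het1 := het (j+1)
  have Het0 := het j
  have Hxt := hxt (j+1)
  have Hx2 := hADMMx (j+1)
  have Hx1 := hADMMx j
  have Hmono := hSigZmono _ _ _ _ (hADMMz (j+1)) (hADMMz j)
  have HD1 := hDG (y (j+1+1), z (j+1+1), xt (j+1+1)) (y (j+1+1), z (j+1+1), x (j+1+1))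
  have HD2 := hDG (y (j+1+1), z (j+1+1), xt (j+1+1)) (y (j+1), z (j+1), x (j+1))
  dsimp only at HD1 HD2
  rw [Hx1] at Hmono
  set a := LinearMap.adjoint A (y (j+1+1)) + LinearMap.adjoint B (z (j+1+1)) - c with ha
  set b := LinearMap.adjoint A (y (j+1)) + LinearMap.adjoint B (z (j+1)) - c with hb
  set dz := z (j+1+1) - z (j+1) with hdz
  set dz0 := z (j+1) - z j with hdz0
  set dy := y (j+1+1) - y (j+1) with hdy
  set dy0 := y (j+1) - y j with hdy0
  set m := LinearMap.adjoint B dz with hm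
  -- vector identities
  have hv1 : LinearMap.adjoint A (y (j+1+1)) + LinearMap.adjoint B (z (j+1)) - c = a - m := by
    rw [ha, hm, hdz, map_sub]; abel
  have hx1 : xt (j+1+1) - x (j+1+1) = β • (a - m) - (τ*β) • a := by
    rw [Hxt, Hx2, hv1]; abel
  have hx2 : xt (j+1+1) - x (j+1) = β • (a - m) := by
    rw [Hxt, hv1]; abel
  have hBa : ⟪B a, dz⟫ = ⟪a, m⟫ := by
    rw [hm]; exact (LinearMap.adjoint_inner_right B a dz).symm
  have hBb : ⟪B b, dz⟫ = ⟪b, m⟫ := by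
    rw [hm]; exact (LinearMap.adjoint_inner_right B b dz).symm
  have hBm : ⟪dz, B m⟫ = ⟪m, m⟫ := by
    conv_lhs => rw [← LinearMap.adjoint_inner_left B m dz]
  clear_value a b dz dz0 dy dy0 m
  -- scalarized monotonicity
  have Hm2 : ⟪dz, SigZ dz⟫
      ≤ -(τ*β*⟪b, m⟫) - β*(⟪a, m⟫ - ⟪b, m⟫) - (⟪dz, T₀ dz⟫ - ⟪dz, T₀ dz0⟫) := by
    refine le_trans Hmono (le_of_eq ?_)
    simp only [map_add, map_smul, inner_sub_left, inner_add_left, inner_neg_left,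
      real_inner_smul_left]
    rw [hBa, hBb, real_inner_comm dz (T₀ dz), real_inner_comm dz (T₀ dz0)]
    ring
  have F1 : ⟪dz, SigZ dz⟫ + β*⟪a,m⟫ + (τ-1)*β*⟪b,m⟫ + (⟪dz, T₀ dz⟫ - ⟪dz, T₀ dz0⟫) ≤ 0 := by
    linarith [Hm2]
  have F2 : 0 ≤ ⟪dz, T₀ dz⟫ - 2*⟪dz, T₀ dz0⟫ + ⟪dz0, T₀ dz0⟫ := by
    have h := hTpsd (dz - dz0)
    simp only [map_sub, inner_sub_left, inner_sub_right] at h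
    rw [real_inner_comm dz (T₀ dz), real_inner_comm dz (T₀ dz0),
      real_inner_comm dz0 (T₀ dz0), hTsym dz dz0] at h
    linarith
  have htT0 : 0 ≤ ⟪dz0, T₀ dz0⟫ := by rw [real_inner_comm]; exact hTpsd dz0
  have htS0 : 0 ≤ ⟪dy0, S dy0⟫ := by rw [real_inner_comm]; exact hSpsd dy0
  have hSS0 : 0 ≤ ⟪dz0, SigZ dz0⟫ := by rw [real_inner_comm]; exact hSigZpsd dz0
  have hbbn : (0:ℝ) ≤ ⟪b, b⟫ := real_inner_self_nonneg
  have hmmn : (0:ℝ) ≤ ⟪m, m⟫ := real_inner_self_nonneg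
  have hcauchy : (β*⟪b,m⟫)^2 ≤ (β*⟪b,b⟫)*(β*⟪m,m⟫) := by
    have h := real_inner_mul_inner_self_le b m
    calc (β*⟪b,m⟫)^2 = β^2 * (⟪b,m⟫*⟪b,m⟫) := by ring
      _ ≤ β^2 * (⟪b,b⟫*⟪m,m⟫) := mul_le_mul_of_nonneg_left h (sq_nonneg β)
      _ = (β*⟪b,b⟫)*(β*⟪m,m⟫) := by ring
  have F3 : 2*(((1-τ)*(σ+τ-1))*(β*⟪b,m⟫))
      ≤ ((1-γ)*(σ-(τ-1)^2))*(β*⟪b,b⟫) + (σ*(1+τ)-1)*(β*⟪m,m⟫) :=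
    quad_ineq' (mul_nonneg (by linarith) hd.le) hf0 hKey hcauchy
      (mul_nonneg hβ.le hbbn) (mul_nonneg hβ.le hmmn)
  have G1 : 2*(σ+τ-1)*(⟪dz, SigZ dz⟫ + β*⟪a,m⟫ + (τ-1)*β*⟪b,m⟫
      + (⟪dz, T₀ dz⟫ - ⟪dz, T₀ dz0⟫)) ≤ 0 := by
    have := mul_le_mul_of_nonneg_left F1 (by linarith : (0:ℝ) ≤ 2*(σ+τ-1))
    simpa using this
  have G2 : 0 ≤ (σ+τ-1)*(⟪dz, T₀ dz⟫ - 2*⟪dz, T₀ dz0⟫ + ⟪dz0, T₀ dz0⟫) :=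
    mul_nonneg he.le F2
  have G4 : 0 ≤ ((1-γ)*(σ*(τ+1)+τ-1) - (σ+τ-1))*⟪dz0, T₀ dz0⟫ :=
    mul_nonneg (by linarith [hγ1]) htT0
  have G5 : 0 ≤ ((1-γ)*(τ*σ))*⟪dy0, S dy0⟫ :=
    mul_nonneg (mul_nonneg (by linarith) (mul_nonneg hτ.le hσpos.le)) htS0
  have G6 : 0 ≤ ((1-γ)*(2*(σ+τ-1)))*⟪dz0, SigZ dz0⟫ :=
    mul_nonneg (mul_nonneg (by linarith) (by linarith)) hSS0
  have KEY : β*((1-τ)^2*⟪a,a⟫ - 2*(1-τ)*⟪a,m⟫ + ⟪m,m⟫)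
      + ((σ-(τ-1)^2)*β*⟪a,a⟫ + τ*σ*⟪dy, S dy⟫ + (σ*(τ+1)+τ-1)*⟪dz, T₀ dz⟫
        + 2*(σ+τ-1)*⟪dz, SigZ dz⟫)
      ≤ σ*(τ*(⟪dy, S dy⟫ + ⟪dz, T₀ dz⟫ + β*⟪m,m⟫) + β*(⟪a,a⟫ - 2*⟪a,m⟫ + ⟪m,m⟫))
      + (1-γ)*((σ-(τ-1)^2)*β*⟪b,b⟫ + τ*σ*⟪dy0, S dy0⟫ + (σ*(τ+1)+τ-1)*⟪dz0, T₀ dz0⟫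
        + 2*(σ+τ-1)*⟪dz0, SigZ dz0⟫) := by
    linarith [G1, G2, F3, G4, G5, G6]
  -- scalarized values
  have hτ0 : τ ≠ 0 := hτ.ne'
  have hβ0 : β ≠ 0 := hβ.ne'
  have hD1g : 2*τ*DG (y (j+1+1), z (j+1+1), xt (j+1+1)) (y (j+1+1), z (j+1+1), x (j+1+1))
      = β*((1-τ)^2*⟪a,a⟫ - 2*(1-τ)*⟪a,m⟫ + ⟪m,m⟫) := by
    rw [HD1]
    simp only [sub_self, map_zero, smul_zero, add_zero, inner_zero_left, inner_zero_right,
      zero_add]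
    rw [hx1, ← real_inner_self_eq_norm_sq]
    simp only [inner_sub_left, inner_sub_right, real_inner_smul_left, real_inner_smul_right]
    rw [real_inner_comm m a]
    field_simp
    ring
  have hD2g : 2*τ*DG (y (j+1+1), z (j+1+1), xt (j+1+1)) (y (j+1), z (j+1), x (j+1))
      = τ*(⟪dy, S dy⟫ + ⟪dz, T₀ dz⟫ + β*⟪m,m⟫) + β*(⟪a,a⟫ - 2*⟪a,m⟫ + ⟪m,m⟫) := by
    rw [HD2, hx2, ← real_inner_self_eq_norm_sq, inner_add_right, real_inner_smul_right, hBm]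
    simp only [inner_sub_left, inner_sub_right, real_inner_smul_left, real_inner_smul_right]
    rw [real_inner_comm m a]
    field_simp
    ring
  have hE1 : 2*τ*et (j+1+1) = (σ-(τ-1)^2)*β*⟪a,a⟫ + τ*σ*⟪dy, S dy⟫
      + (σ*(τ+1)+τ-1)*⟪dz, T₀ dz⟫ + 2*(σ+τ-1)*⟪dz, SigZ dz⟫ := by
    rw [Het1, ← real_inner_self_eq_norm_sq]
    field_simp
  have hE0 : 2*τ*et (j+1) = (σ-(τ-1)^2)*β*⟪b,b⟫ + τ*σ*⟪dy0, S dy0⟫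
      + (σ*(τ+1)+τ-1)*⟪dz0, T₀ dz0⟫ + 2*(σ+τ-1)*⟪dz0, SigZ dz0⟫ := by
    rw [Het0, ← real_inner_self_eq_norm_sq]
    field_simp
  have h2τ : (0:ℝ) < 2*τ := by linarith
  refine le_of_mul_le_mul_left ?_ h2τ
  have e1 : 2*τ*(DG (y (j+1+1), z (j+1+1), xt (j+1+1)) (y (j+1+1), z (j+1+1), x (j+1+1))
      + et (j+1+1))
      = 2*τ*DG (y (j+1+1), z (j+1+1), xt (j+1+1)) (y (j+1+1), z (j+1+1), x (j+1+1))
        + 2*τ*et (j+1+1) := by ring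
  have e2 : 2*τ*(σ*DG (y (j+1+1), z (j+1+1), xt (j+1+1)) (y (j+1), z (j+1), x (j+1))
      + (1-γ)*et (j+1))
      = σ*(2*τ*DG (y (j+1+1), z (j+1+1), xt (j+1+1)) (y (j+1), z (j+1), x (j+1)))
        + (1-γ)*(2*τ*et (j+1)) := by ring
  rw [e1, e2, hD1g, hD2g, hE0, hE1]
  exact KEY
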